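/- Let Σ < H be a non-trivial subgroup of an infinite group H. Then Σ is highly core-free if and only if the left multiplication action of H on the coset space H/Σ is highly faithful. -/
import Mathlib


/-- The set ΣF = {σf : σ ∈ Σ, f ∈ F}. -/
def cosetProd {H : Type*} [Group H] (A : Subgroup H) (F : Set H) : Set H :=
  {h | ∃ σ ∈ A, ∃ f ∈ F, h = σ * f}

/-- A subgroup `A ≤ H` is highly core-free if for every finite `F ⊆ H`, every `n ≥ 1`
and all nonempty `S₁, …, Sₙ ⊆ H` covering `H \ ΣF`, some `Sₖ` has trivial core
`⋂_{h ∈ Sₖ} h⁻¹ A h = {1}`. -/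
def HighlyCoreFree {H : Type*} [Group H] (A : Subgroup H) : Prop :=
  ∀ F : Set H, F.Finite → ∀ n : ℕ, 1 ≤ n → ∀ S : Fin n → Set H,
    (∀ k, (S k).Nonempty) → (∀ h : H, h ∉ cosetProd A F → ∃ k, h ∈ S k) →
    ∃ k, ∀ x : H, (∀ h ∈ S k, h * x * h⁻¹ ∈ A) → x = 1
/-- An action is highly faithful if for every finite `F ⊆ X` and nonempty sets
`S₁,…,Sₙ` covering `X \ F`, some `Sₖ` is a faithfulness witness. -/
def HighlyFaithful {H X : Type*} [Group H] [MulAction H X] : Prop :=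
  ∀ F : Set X, F.Finite → ∀ n : ℕ, 1 ≤ n → ∀ S : Fin n → Set X,
    (∀ k, (S k).Nonempty) → (∀ x : X, x ∉ F → ∃ k, x ∈ S k) →
    ∃ k, ∀ h : H, (∀ x ∈ S k, h • x = x) → h = 1

/-- A non-trivial subgroup of an infinite group is highly core-free iff the left
multiplication action on `H/Σ` is highly faithful. -/
theorem hcf_iff_highlyFaithful {H : Type*} [Group H] [Infinite H] (A : Subgroup H)
    (hne : A ≠ ⊥) :
    HighlyCoreFree A ↔ @HighlyFaithful H (H ⧸ A) _ _ := by
  have smul_mk : ∀ (g h : H), g • (QuotientGroup.mk h : H ⧸ A) = QuotientGroup.mk (g * h) :=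
    fun g h => rfl
  constructor
  · intro hcf F hF n hn S hSne hcov
    -- pull back to H
    have key : ∀ h : H, h ∈ cosetProd A ((fun c : H ⧸ A => (Quotient.out c)⁻¹) '' F) ↔
        (QuotientGroup.mk h⁻¹ : H ⧸ A) ∈ F := by
      intro h
      constructor
      · rintro ⟨σ, hσ, f, ⟨c, hc, rfl⟩, rfl⟩
        have : (QuotientGroup.mk (σ * (Quotient.out c)⁻¹)⁻¹ : H ⧸ A) = c := by
          rw [show (σ * (Quotient.out c)⁻¹)⁻¹ = Quotient.out c * σ⁻¹ by group]
          rw [← Quotient.out_eq c]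
          exact (QuotientGroup.eq).2 (by simpa using A.inv_mem hσ)
        rw [this]; exact hc
      · intro hc
        refine ⟨h * Quotient.out (QuotientGroup.mk h⁻¹ : H ⧸ A), ?_,
          (Quotient.out (QuotientGroup.mk h⁻¹ : H ⧸ A))⁻¹,
          ⟨_, hc, rfl⟩, by group⟩
        have := Quotient.out_eq (QuotientGroup.mk h⁻¹ : H ⧸ A)
        have h2 : (QuotientGroup.mk h⁻¹ : H ⧸ A) =
            QuotientGroup.mk (Quotient.out (QuotientGroup.mk h⁻¹ : H ⧸ A)) := this.symm
        have h3 := (QuotientGroup.eq).1 h2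
        simpa using h3
    obtain ⟨k, hk⟩ := hcf ((fun c : H ⧸ A => (Quotient.out c)⁻¹) '' F) (hF.image _) n hn
      (fun k => {h : H | (QuotientGroup.mk h⁻¹ : H ⧸ A) ∈ S k})
      (fun k => by
        obtain ⟨c, hc⟩ := hSne k
        exact ⟨(Quotient.out c)⁻¹, by simpa [Quotient.out_eq] using hc⟩)
      (fun h hh => by
        have : (QuotientGroup.mk h⁻¹ : H ⧸ A) ∉ F := fun hc => hh ((key h).2 hc)
        obtain ⟨k, hk⟩ := hcov _ this
        exact ⟨k, hk⟩)
    refine ⟨k, fun g hg => ?_⟩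
    refine hk g fun h hh => ?_
    have := hg (QuotientGroup.mk h⁻¹) hh
    rw [smul_mk] at this
    have h3 := (QuotientGroup.eq).1 this
    have : h * g⁻¹ * h⁻¹ ∈ A := by
      have : (g * h⁻¹)⁻¹ * h⁻¹ ∈ A := h3
      simpa [mul_assoc] using this
    simpa [mul_assoc] using A.inv_mem this
  · intro hhf F hF n hn S hSne hcov
    obtain ⟨k, hk⟩ := hhf ((fun f : H => (QuotientGroup.mk f⁻¹ : H ⧸ A)) '' F) (hF.image _) n hn
      (fun k => (fun h : H => (QuotientGroup.mk h⁻¹ : H ⧸ A)) '' S k)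
      (fun k => (hSne k).image _)
      (fun c hc => by
        have h1 : ((Quotient.out c)⁻¹ : H) ∉ cosetProd A F := by
          rintro ⟨σ, hσ, f, hf, heq⟩
          apply hc
          refine ⟨f, hf, ?_⟩
          have : ((Quotient.out c)⁻¹ : H) = σ * f := heq
          have hcc : c = QuotientGroup.mk (f⁻¹ * σ⁻¹) := by
            rw [← Quotient.out_eq c]
            congr 1
            rw [show Quotient.out c = f⁻¹ * σ⁻¹ by
              rw [show (f⁻¹ * σ⁻¹ : H) = (σ * f)⁻¹ by group, ← this]; group]
          rw [hcc]
          exact (QuotientGroup.eq).2 (by simpa using hσ)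
        obtain ⟨k, hk⟩ := hcov _ h1
        exact ⟨k, (Quotient.out c)⁻¹, hk, by simp [Quotient.out_eq]⟩)
    refine ⟨k, fun x hx => ?_⟩
    refine hk x fun c hc => ?_
    obtain ⟨h, hh, rfl⟩ := hc
    rw [smul_mk]
    refine (QuotientGroup.eq).2 ?_
    have := hx h hh
    have h2 : h * x⁻¹ * h⁻¹ ∈ A := by simpa [mul_assoc] using A.inv_mem this
    have : (x * h⁻¹)⁻¹ * h⁻¹ ∈ A := by
      have : (x * h⁻¹)⁻¹ * h⁻¹ = h * x⁻¹ * h⁻¹ := by group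
      rw [this]; exact h2
    exact this
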